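/- (Theorem 1.) Let p be a strictly positive joint probability mass function of random variables (X_1, …, X_d, Y) on finite types, let G be a graph on vertex set {1,…,d}, fix a node i and an integer k ≥ 0, and let N_k(i) be the set of nodes at graph distance at most k from i. Suppose there exists a subset S ⊆ N_k(i) with i ∈ S such that for every U ⊆ S \ {i} and every V ⊆ {1,…,d} \ S, both I_a(X_i; X_V | X_U, Y) ≤ ε and I_a(X_i; X_V | X_U) ≤ ε. Then the expected error between the L-Shapley estimate of order k and the Shapley value satisfies E_X | φ̂^k_X(i) − φ_X(i) | ≤ 4ε, where the expectation is over X drawn from the marginal distribution of p. -/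

import Mathlib

open scoped Classical BigOperators

variable {d : ℕ} {𝒳 : Fin d → Type*} [∀ j, Fintype (𝒳 j)] {𝒴 : Type*} [Fintype 𝒴]

/-- The joint marginal probability `p(x_S, y)` of `(X_S, Y)` at the restriction of `x` to `S`. -/
noncomputable def margXY (p : (∀ j, 𝒳 j) → 𝒴 → ℝ) (S : Finset (Fin d))
    (x : ∀ j, 𝒳 j) (y : 𝒴) : ℝ :=
  ∑ x' : ∀ j, 𝒳 j, if ∀ j ∈ S, x' j = x j then p x' y else 0

/-- The marginal probability `p(x_S)` of `X_S` at the restriction of `x` to `S`. -/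
noncomputable def margX (p : (∀ j, 𝒳 j) → 𝒴 → ℝ) (S : Finset (Fin d))
    (x : ∀ j, 𝒳 j) : ℝ :=
  ∑ y, margXY p S x y

/-- The marginal probability `p(x)` of the full feature vector `X`. -/
noncomputable def pX (p : (∀ j, 𝒳 j) → 𝒴 → ℝ) (x : ∀ j, 𝒳 j) : ℝ :=
  ∑ y, p x y

/-- The conditional probability `p(y | x_S) = p(y, x_S) / p(x_S)`
(for `S = ∅` this is `p(y)` when `p` sums to one). -/
noncomputable def condY (p : (∀ j, 𝒳 j) → 𝒴 → ℝ) (S : Finset (Fin d))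
    (x : ∀ j, 𝒳 j) (y : 𝒴) : ℝ :=
  margXY p S x y / margX p S x

/-- The importance score `v_x(S) = ∑_y p(y | x) log p(y | x_S)`. -/
noncomputable def impScore (p : (∀ j, 𝒳 j) → 𝒴 → ℝ) (x : ∀ j, 𝒳 j)
    (S : Finset (Fin d)) : ℝ :=
  ∑ y, condY p Finset.univ x y * Real.log (condY p S x y)

/-- The marginal contribution `m_x(S, i) = v_x(S) − v_x(S \ {i})`. -/
noncomputable def margContrib (p : (∀ j, 𝒳 j) → 𝒴 → ℝ) (x : ∀ j, 𝒳 j)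
    (S : Finset (Fin d)) (i : Fin d) : ℝ :=
  impScore p x S - impScore p x (S.erase i)

/-- The Shapley value `φ_x(i)`. -/
noncomputable def shapley (p : (∀ j, 𝒳 j) → 𝒴 → ℝ) (x : ∀ j, 𝒳 j) (i : Fin d) : ℝ :=
  (1 / (d : ℝ)) * ∑ A : Finset (Fin d),
    if i ∈ A then margContrib p x A i / ((d - 1).choose (A.card - 1) : ℝ) else 0

/-- The restricted Shapley estimate `φ̂^S_x(i)` over a feature subset `S` containing `i`. -/
noncomputable def shapleyRes (p : (∀ j, 𝒳 j) → 𝒴 → ℝ) (x : ∀ j, 𝒳 j)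
    (S : Finset (Fin d)) (i : Fin d) : ℝ :=
  (1 / (S.card : ℝ)) * ∑ T ∈ S.powerset,
    if i ∈ T then margContrib p x T i / ((S.card - 1).choose (T.card - 1) : ℝ) else 0

/-- The absolute conditional mutual information `I_a(X_A; X_B | X_C)`. -/
noncomputable def IaX (p : (∀ j, 𝒳 j) → 𝒴 → ℝ) (A B C : Finset (Fin d)) : ℝ :=
  ∑ x : ∀ j, 𝒳 j, pX p x *
    |Real.log ((margX p (A ∪ B ∪ C) x * margX p C x) /
      (margX p (A ∪ C) x * margX p (B ∪ C) x))|

/-- The absolute conditional mutual information `I_a(X_A; X_B | X_C, Y)`. -/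
noncomputable def IaXY (p : (∀ j, 𝒳 j) → 𝒴 → ℝ) (A B C : Finset (Fin d)) : ℝ :=
  ∑ x : ∀ j, 𝒳 j, ∑ y, p x y *
    |Real.log ((margXY p (A ∪ B ∪ C) x y * margXY p C x y) /
      (margXY p (A ∪ C) x y * margXY p (B ∪ C) x y))|

/-- The `k`-neighborhood `N_k(i)` of a node `i` in a graph `G`: all nodes at
shortest-path graph distance at most `k` from `i`. -/
noncomputable def nbhd (G : SimpleGraph (Fin d)) (i : Fin d) (k : ℕ) : Finset (Fin d) :=
  Finset.univ.filter fun j => G.Reachable i j ∧ G.dist i j ≤ k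

/-! ### Auxiliary numeric lemmas -/

lemma key_nat (m k : ℕ) :
    (m+1) * (m.choose k) * ((m+2).choose (k+1)) = (m+2) * ((m+1).choose k) * ((m+1).choose (k+1)) := by
  have h1 : (m+1) * (m.choose k) = (m+1).choose (k+1) * (k+1) := Nat.add_one_mul_choose_eq m k
  have h2 : (m+2) * ((m+1).choose k) = (m+2).choose (k+1) * (k+1) := Nat.add_one_mul_choose_eq (m+1) k
  rw [h1, h2]; ring

lemma beta_rec (m k : ℕ) (hk : k ≤ m) :
    (((m:ℝ)+2) * ((m+1).choose k))⁻¹ + (((m:ℝ)+2) * ((m+1).choose (k+1)))⁻¹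
      = (((m:ℝ)+1) * (m.choose k))⁻¹ := by
  have c1 : (0:ℝ) < ((m+1).choose k : ℝ) := by
    exact_mod_cast Nat.choose_pos (le_trans hk (Nat.le_succ m))
  have c2 : (0:ℝ) < ((m+1).choose (k+1) : ℝ) := by
    exact_mod_cast Nat.choose_pos (Nat.succ_le_succ hk)
  have c3 : (0:ℝ) < ((m.choose k) : ℝ) := by exact_mod_cast Nat.choose_pos hk
  have hm2 : (0:ℝ) < (m:ℝ)+2 := by positivity
  have hm1 : (0:ℝ) < (m:ℝ)+1 := by positivity
  have hkey : ((m:ℝ)+1) * (m.choose k) * ((m+2).choose (k+1))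
      = ((m:ℝ)+2) * ((m+1).choose k) * ((m+1).choose (k+1)) := by
    exact_mod_cast congrArg (Nat.cast : ℕ → ℝ) (key_nat m k)
  have hch : ((m+2).choose (k+1) : ℝ) = ((m+1).choose k : ℝ) + ((m+1).choose (k+1) : ℝ) := by
    exact_mod_cast congrArg (Nat.cast : ℕ → ℝ) (Nat.choose_succ_succ (m+1) k)
  rw [hch] at hkey
  field_simp
  linear_combination hkey

lemma sum_w (m s w : ℕ) (hws : w ≤ s) :
    ∑ v ∈ Finset.range (m+1), (m.choose v : ℝ) * (((s+m+1:ℕ):ℝ) * (((s+m).choose (w+v)):ℝ))⁻¹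
      = (((s+1:ℕ):ℝ) * ((s.choose w):ℝ))⁻¹ := by
  induction m with
  | zero => simp
  | succ m ih =>
    have key : ∀ v ∈ Finset.range (m+1),
        (m.choose v : ℝ) * ((((s+(m+1)+1:ℕ)):ℝ) * (((s+(m+1)).choose (w+(v+1))):ℝ))⁻¹
        + (m.choose v : ℝ) * ((((s+(m+1)+1:ℕ)):ℝ) * (((s+(m+1)).choose (w+v)):ℝ))⁻¹
        = (m.choose v : ℝ) * (((s+m+1:ℕ):ℝ) * (((s+m).choose (w+v)):ℝ))⁻¹ := by
      intro v hv
      rw [← mul_add]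
      congr 1
      have hb := beta_rec (s+m) (w+v) (by
        have : v ≤ m := Nat.lt_succ_iff.mp (Finset.mem_range.mp hv)
        omega)
      have e1 : ((s+(m+1)+1:ℕ):ℝ) = ((s+m:ℕ):ℝ) + 2 := by push_cast; ring
      have e2 : s+(m+1) = (s+m)+1 := by omega
      have e3 : w+(v+1) = (w+v)+1 := by omega
      have e4 : ((s+m+1:ℕ):ℝ) = ((s+m:ℕ):ℝ)+1 := by push_cast; ring
      rw [e1, e2, e3, e4, add_comm]
      exact hb
    rw [Finset.sum_range_succ']
    have hsplit : ∀ v, ((m+1).choose (v+1) : ℝ) = (m.choose v : ℝ) + (m.choose (v+1) : ℝ) := by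
      intro v; exact_mod_cast congrArg (Nat.cast : ℕ → ℝ) (Nat.choose_succ_succ (m+1-1) v)
    calc ∑ v ∈ Finset.range (m+1), ((m+1).choose (v+1) : ℝ) *
            (((s+(m+1)+1:ℕ):ℝ) * (((s+(m+1)).choose (w+(v+1))):ℝ))⁻¹
          + ((m+1).choose 0 : ℝ) * (((s+(m+1)+1:ℕ):ℝ) * (((s+(m+1)).choose (w+0)):ℝ))⁻¹
        = (∑ v ∈ Finset.range (m+1), (m.choose v : ℝ) *
            (((s+(m+1)+1:ℕ):ℝ) * (((s+(m+1)).choose (w+(v+1))):ℝ))⁻¹)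
          + (∑ v ∈ Finset.range (m+1), (m.choose (v+1) : ℝ) *
            (((s+(m+1)+1:ℕ):ℝ) * (((s+(m+1)).choose (w+(v+1))):ℝ))⁻¹
          + (m.choose 0 : ℝ) * (((s+(m+1)+1:ℕ):ℝ) * (((s+(m+1)).choose (w+0)):ℝ))⁻¹) := by
          have hpt : ∀ v ∈ Finset.range (m+1), ((m+1).choose (v+1) : ℝ) *
              (((s+(m+1)+1:ℕ):ℝ) * (((s+(m+1)).choose (w+(v+1))):ℝ))⁻¹
              = (m.choose v : ℝ) * (((s+(m+1)+1:ℕ):ℝ) * (((s+(m+1)).choose (w+(v+1))):ℝ))⁻¹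
              + (m.choose (v+1) : ℝ) * (((s+(m+1)+1:ℕ):ℝ) * (((s+(m+1)).choose (w+(v+1))):ℝ))⁻¹ := by
            intro v _; rw [hsplit]; ring
          rw [Finset.sum_congr rfl hpt, Finset.sum_add_distrib]
          simp only [Nat.choose_zero_right]
          ring
      _ = (∑ v ∈ Finset.range (m+1), (m.choose v : ℝ) *
            (((s+(m+1)+1:ℕ):ℝ) * (((s+(m+1)).choose (w+(v+1))):ℝ))⁻¹)
          + ∑ v ∈ Finset.range (m+1), (m.choose v : ℝ) *
            (((s+(m+1)+1:ℕ):ℝ) * (((s+(m+1)).choose (w+v)):ℝ))⁻¹ := by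
          congr 1
          rw [← Finset.sum_range_succ' (fun v => (m.choose v : ℝ) *
            (((s+(m+1)+1:ℕ):ℝ) * (((s+(m+1)).choose (w+v)):ℝ))⁻¹) (m+1)]
          rw [Finset.sum_range_succ]
          simp [Nat.choose_succ_self]
      _ = ∑ v ∈ Finset.range (m+1), (m.choose v : ℝ) *
            (((s+m+1:ℕ):ℝ) * (((s+m).choose (w+v)):ℝ))⁻¹ := by
          rw [← Finset.sum_add_distrib]
          exact Finset.sum_congr rfl key
      _ = _ := ih

/-! ### The Shapley weight identity -/

lemma weight_id {α : Type*} [DecidableEq α] (D S W : Finset α) (hSD : S ⊆ D) (hWS : W ⊆ S)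
    (hWne : W.Nonempty) :
    ∑ A ∈ D.powerset, (if A ∩ S = W then
        ((D.card : ℝ) * (((D.card - 1).choose (A.card - 1)):ℝ))⁻¹ else 0)
      = ((S.card:ℝ) * (((S.card - 1).choose (W.card - 1)):ℝ))⁻¹ := by
  classical
  rw [← Finset.sum_filter]
  have hdisj : Disjoint (D \ S) S := Finset.sdiff_disjoint
  have hbij : ∑ A ∈ D.powerset.filter (fun A => A ∩ S = W),
      ((D.card : ℝ) * (((D.card - 1).choose (A.card - 1)):ℝ))⁻¹
      = ∑ V ∈ (D \ S).powerset,
      ((D.card : ℝ) * (((D.card - 1).choose ((W.card + V.card) - 1)):ℝ))⁻¹ := by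
    refine Finset.sum_nbij' (fun A => A \ S) (fun V => W ∪ V) ?_ ?_ ?_ ?_ ?_
    · intro A hA
      rw [Finset.mem_filter, Finset.mem_powerset] at hA
      exact Finset.mem_powerset.mpr (Finset.sdiff_subset_sdiff hA.1 le_rfl)
    · intro V hV
      rw [Finset.mem_powerset] at hV
      rw [Finset.mem_filter, Finset.mem_powerset]
      constructor
      · exact Finset.union_subset (hWS.trans hSD) (hV.trans (Finset.sdiff_subset))
      · rw [Finset.union_inter_distrib_right, Finset.inter_eq_left.mpr hWS,
          (Finset.disjoint_iff_inter_eq_empty.mp ((hdisj.mono_left hV))), Finset.union_empty]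
    · intro A hA
      rw [Finset.mem_filter] at hA
      show W ∪ A \ S = A
      rw [← hA.2, Finset.union_comm, Finset.sdiff_union_inter]
    · intro V hV
      rw [Finset.mem_powerset] at hV
      show (W ∪ V) \ S = V
      rw [Finset.union_sdiff_distrib, Finset.sdiff_eq_empty_iff_subset.mpr hWS,
        Finset.sdiff_eq_self_of_disjoint (hdisj.mono_left hV), Finset.empty_union]
    · intro A hA
      rw [Finset.mem_filter] at hA
      have hc : W.card + (A \ S).card = A.card := by
        have := Finset.card_inter_add_card_sdiff A S
        rw [hA.2] at this; exact this
      show _ = ((D.card : ℝ) * (((D.card - 1).choose ((W.card + (A \ S).card) - 1)):ℝ))⁻¹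
      rw [hc]
  rw [hbij, Finset.sum_powerset]
  set m := (D \ S).card with hm
  have hinner : ∀ j ∈ Finset.range (m+1),
      (∑ V ∈ Finset.powersetCard j (D \ S),
        ((D.card : ℝ) * (((D.card - 1).choose ((W.card + V.card) - 1)):ℝ))⁻¹)
      = (m.choose j : ℝ) * ((D.card : ℝ) * (((D.card - 1).choose ((W.card + j) - 1)):ℝ))⁻¹ := by
    intro j hj
    rw [Finset.sum_congr rfl (fun V hV => by
      rw [(Finset.mem_powersetCard.mp hV).2]),
      Finset.sum_const, Finset.card_powersetCard, nsmul_eq_mul]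
  rw [Finset.sum_congr rfl hinner]
  obtain ⟨w', hw'⟩ : ∃ w', W.card = w'+1 :=
    ⟨W.card - 1, by have := Finset.card_pos.mpr hWne; omega⟩
  obtain ⟨s', hs'⟩ : ∃ s', S.card = s'+1 :=
    ⟨S.card - 1, by have := Finset.card_pos.mpr (hWne.mono hWS); omega⟩
  have hD : D.card = s' + m + 1 := by
    have h1 := Finset.card_sdiff_add_card_inter D S
    rw [Finset.inter_eq_right.mpr hSD] at h1
    omega
  have hws : w' ≤ s' := by have := Finset.card_le_card hWS; omega
  have e1 : D.card - 1 = s' + m := by omega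
  have e2 : ∀ j, W.card + j - 1 = w' + j := fun j => by omega
  have e3 : W.card - 1 = w' := by omega
  have e4 : S.card - 1 = s' := by omega
  simp only [hD, e1, e2, e3, e4, hs']
  exact sum_w m s' w' hws

lemma sum_weight_one {α : Type*} [DecidableEq α] (D : Finset α) (i : α) (hiD : i ∈ D) :
    ∑ A ∈ D.powerset, (if i ∈ A then
        ((D.card : ℝ) * (((D.card - 1).choose (A.card - 1)):ℝ))⁻¹ else 0) = 1 := by
  have h := weight_id D {i} {i} (Finset.singleton_subset_iff.mpr hiD) le_rfl
    ⟨i, Finset.mem_singleton_self i⟩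
  simp only [Finset.card_singleton] at h
  norm_num at h
  rw [← h]
  refine Finset.sum_congr rfl fun A hA => ?_
  congr 1
  simp [Finset.inter_eq_right, Finset.singleton_subset_iff, eq_comm]

/-! ### Positivity and basic facts about the marginals -/

lemma margXY_pos (p : (∀ j, 𝒳 j) → 𝒴 → ℝ) (hpos : ∀ x y, 0 < p x y)
    (T : Finset (Fin d)) (x : ∀ j, 𝒳 j) (y : 𝒴) : 0 < margXY p T x y := by
  unfold margXY
  refine Finset.sum_pos' (fun x' _ => ?_) ⟨x, Finset.mem_univ x, ?_⟩
  · split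
    · exact (hpos _ _).le
    · exact le_rfl
  · rw [if_pos (fun j _ => rfl)]; exact hpos x y

lemma margX_pos [Nonempty 𝒴] (p : (∀ j, 𝒳 j) → 𝒴 → ℝ) (hpos : ∀ x y, 0 < p x y)
    (T : Finset (Fin d)) (x : ∀ j, 𝒳 j) : 0 < margX p T x :=
  Finset.sum_pos (fun y _ => margXY_pos p hpos T x y) Finset.univ_nonempty

lemma pX_pos [Nonempty 𝒴] (p : (∀ j, 𝒳 j) → 𝒴 → ℝ) (hpos : ∀ x y, 0 < p x y)
    (x : ∀ j, 𝒳 j) : 0 < pX p x :=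
  Finset.sum_pos (fun y _ => hpos x y) Finset.univ_nonempty

lemma margXY_univ (p : (∀ j, 𝒳 j) → 𝒴 → ℝ) (x : ∀ j, 𝒳 j) (y : 𝒴) :
    margXY p Finset.univ x y = p x y := by
  unfold margXY
  rw [Finset.sum_eq_single x]
  · rw [if_pos (fun j _ => rfl)]
  · intro x' _ hne
    rw [if_neg]
    intro h; exact hne (funext fun j => h j (Finset.mem_univ j))
  · intro h; exact absurd (Finset.mem_univ x) h

lemma margX_univ (p : (∀ j, 𝒳 j) → 𝒴 → ℝ) (x : ∀ j, 𝒳 j) :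
    margX p Finset.univ x = pX p x :=
  Finset.sum_congr rfl fun y _ => margXY_univ p x y

lemma condY_univ (p : (∀ j, 𝒳 j) → 𝒴 → ℝ) (x : ∀ j, 𝒳 j) (y : 𝒴) :
    condY p Finset.univ x y = p x y / pX p x := by
  unfold condY; rw [margXY_univ, margX_univ]

lemma pX_mul_condY [Nonempty 𝒴] (p : (∀ j, 𝒳 j) → 𝒴 → ℝ) (hpos : ∀ x y, 0 < p x y)
    (x : ∀ j, 𝒳 j) (y : 𝒴) : pX p x * condY p Finset.univ x y = p x y := by
  rw [condY_univ, mul_div_cancel₀ _ (pX_pos p hpos x).ne']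

/-! ### The key analytic bound on marginal contributions -/

lemma contrib_bound [Nonempty 𝒴] (p : (∀ j, 𝒳 j) → 𝒴 → ℝ) (hpos : ∀ x y, 0 < p x y)
    (i : Fin d) (U V : Finset (Fin d)) (hiU : i ∉ U) (hiV : i ∉ V) :
    ∑ x : ∀ j, 𝒳 j, pX p x *
        |margContrib p x (insert i (U ∪ V)) i - margContrib p x (insert i U) i|
      ≤ IaXY p {i} V U + IaX p {i} V U := by
  set A := insert i (U ∪ V) with hAdef
  set B := insert i U with hBdef
  have heA : A.erase i = U ∪ V := Finset.erase_insert (by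
    simp only [Finset.mem_union]; tauto)
  have heB : B.erase i = U := Finset.erase_insert hiU
  set LY : (∀ j, 𝒳 j) → 𝒴 → ℝ := fun x y =>
    Real.log (margXY p A x y) - Real.log (margXY p (U ∪ V) x y)
      - Real.log (margXY p B x y) + Real.log (margXY p U x y) with hLY
  set LX : (∀ j, 𝒳 j) → ℝ := fun x =>
    Real.log (margX p A x) - Real.log (margX p (U ∪ V) x)
      - Real.log (margX p B x) + Real.log (margX p U x) with hLX
  have hdiff : ∀ x, margContrib p x A i - margContrib p x B i
      = ∑ y, condY p Finset.univ x y * (LY x y - LX x) := by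
    intro x
    unfold margContrib impScore
    rw [heA, heB]
    simp only [← Finset.sum_sub_distrib]
    refine Finset.sum_congr rfl fun y _ => ?_
    have hlog : ∀ T : Finset (Fin d), Real.log (condY p T x y)
        = Real.log (margXY p T x y) - Real.log (margX p T x) := by
      intro T
      unfold condY
      exact Real.log_div (margXY_pos p hpos T x y).ne' (margX_pos p hpos T x).ne'
    rw [hlog A, hlog (U ∪ V), hlog B, hlog U, hLY, hLX]
    ring
  have hbound : ∀ x, pX p x * |margContrib p x A i - margContrib p x B i|
      ≤ (∑ y, p x y * |LY x y|) + pX p x * |LX x| := by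
    intro x
    rw [hdiff x]
    have hc_nonneg : ∀ y : 𝒴, 0 ≤ condY p Finset.univ x y := fun y => by
      rw [condY_univ]
      exact div_nonneg (hpos x y).le (pX_pos p hpos x).le
    calc pX p x * |∑ y, condY p Finset.univ x y * (LY x y - LX x)|
        ≤ pX p x * ∑ y, |condY p Finset.univ x y * (LY x y - LX x)| := by
          exact mul_le_mul_of_nonneg_left (Finset.abs_sum_le_sum_abs _ _) (pX_pos p hpos x).le
      _ = ∑ y, p x y * |LY x y - LX x| := by
          rw [Finset.mul_sum]
          refine Finset.sum_congr rfl fun y _ => ?_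
          rw [abs_mul, abs_of_nonneg (hc_nonneg y), ← mul_assoc, pX_mul_condY p hpos]
      _ ≤ ∑ y, p x y * (|LY x y| + |LX x|) := by
          refine Finset.sum_le_sum fun y _ => ?_
          refine mul_le_mul_of_nonneg_left ?_ (hpos x y).le
          exact (abs_sub _ _)
      _ = (∑ y, p x y * |LY x y|) + pX p x * |LX x| := by
          unfold pX
          simp only [mul_add]
          rw [Finset.sum_add_distrib, ← Finset.sum_mul]
  have hIY : ∑ x : ∀ j, 𝒳 j, ∑ y, p x y * |LY x y| = IaXY p {i} V U := by
    unfold IaXY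
    refine Finset.sum_congr rfl fun x _ => Finset.sum_congr rfl fun y _ => ?_
    congr 1
    have hU1 : {i} ∪ V ∪ U = A := by
      rw [hAdef]; ext a
      simp only [Finset.mem_union, Finset.mem_singleton, Finset.mem_insert]
      tauto
    have hU2 : {i} ∪ U = B := by
      rw [hBdef, Finset.insert_eq]
    have hU3 : V ∪ U = U ∪ V := Finset.union_comm V U
    rw [hU1, hU2, hU3]
    rw [Real.log_div (mul_pos (margXY_pos p hpos A x y) (margXY_pos p hpos U x y)).ne'
        (mul_pos (margXY_pos p hpos B x y) (margXY_pos p hpos (U ∪ V) x y)).ne',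
      Real.log_mul (margXY_pos p hpos A x y).ne' (margXY_pos p hpos U x y).ne',
      Real.log_mul (margXY_pos p hpos B x y).ne' (margXY_pos p hpos (U ∪ V) x y).ne', hLY]
    congr 1
    ring
  have hIX : ∑ x : ∀ j, 𝒳 j, pX p x * |LX x| = IaX p {i} V U := by
    unfold IaX
    refine Finset.sum_congr rfl fun x _ => ?_
    congr 1
    have hU1 : {i} ∪ V ∪ U = A := by
      rw [hAdef]; ext a
      simp only [Finset.mem_union, Finset.mem_singleton, Finset.mem_insert]
      tauto
    have hU2 : {i} ∪ U = B := by
      rw [hBdef, Finset.insert_eq]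
    have hU3 : V ∪ U = U ∪ V := Finset.union_comm V U
    rw [hU1, hU2, hU3]
    rw [Real.log_div (mul_pos (margX_pos p hpos A x) (margX_pos p hpos U x)).ne'
        (mul_pos (margX_pos p hpos B x) (margX_pos p hpos (U ∪ V) x)).ne',
      Real.log_mul (margX_pos p hpos A x).ne' (margX_pos p hpos U x).ne',
      Real.log_mul (margX_pos p hpos B x).ne' (margX_pos p hpos (U ∪ V) x).ne', hLX]
    congr 1
    ring
  calc ∑ x : ∀ j, 𝒳 j, pX p x * |margContrib p x A i - margContrib p x B i|
      ≤ ∑ x : ∀ j, 𝒳 j, ((∑ y, p x y * |LY x y|) + pX p x * |LX x|) :=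
        Finset.sum_le_sum fun x _ => hbound x
    _ = (∑ x : ∀ j, 𝒳 j, ∑ y, p x y * |LY x y|) + ∑ x : ∀ j, 𝒳 j, pX p x * |LX x| :=
        Finset.sum_add_distrib
    _ = IaXY p {i} V U + IaX p {i} V U := by rw [hIY, hIX]

/-! ### The generic Shapley sum and its decomposition -/

noncomputable def shapGen (p : (∀ j, 𝒳 j) → 𝒴 → ℝ) (x : ∀ j, 𝒳 j)
    (D : Finset (Fin d)) (i : Fin d) : ℝ :=
  ∑ A ∈ D.powerset, if i ∈ A then
    ((D.card : ℝ) * (((D.card - 1).choose (A.card - 1)):ℝ))⁻¹ * margContrib p x A i else 0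

lemma shapleyRes_eq_shapGen (p : (∀ j, 𝒳 j) → 𝒴 → ℝ) (x : ∀ j, 𝒳 j)
    (S : Finset (Fin d)) (i : Fin d) : shapleyRes p x S i = shapGen p x S i := by
  unfold shapleyRes shapGen
  rw [Finset.mul_sum]
  refine Finset.sum_congr rfl fun T _ => ?_
  rw [mul_ite, mul_zero]
  congr 1
  rw [div_eq_mul_inv]
  ring

lemma shapley_eq_shapGen (p : (∀ j, 𝒳 j) → 𝒴 → ℝ) (x : ∀ j, 𝒳 j) (i : Fin d) :
    shapley p x i = shapGen p x Finset.univ i := by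
  unfold shapley shapGen
  rw [Finset.powerset_univ, Finset.mul_sum]
  refine Finset.sum_congr rfl fun T _ => ?_
  rw [mul_ite, mul_zero]
  congr 1
  simp only [Finset.card_univ, Fintype.card_fin]
  rw [div_eq_mul_inv]
  ring

lemma shapGen_sub (p : (∀ j, 𝒳 j) → 𝒴 → ℝ) (x : ∀ j, 𝒳 j) (D S : Finset (Fin d))
    (i : Fin d) (hSD : S ⊆ D) (hiS : i ∈ S) :
    shapGen p x D i - shapGen p x S i
      = ∑ A ∈ D.powerset, if i ∈ A then
          ((D.card : ℝ) * (((D.card - 1).choose (A.card - 1)):ℝ))⁻¹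
            * (margContrib p x A i - margContrib p x (A ∩ S) i) else 0 := by
  classical
  have hgroup : ∑ A ∈ D.powerset, (if i ∈ A then
      ((D.card : ℝ) * (((D.card - 1).choose (A.card - 1)):ℝ))⁻¹
        * margContrib p x (A ∩ S) i else 0)
      = shapGen p x S i := by
    rw [← Finset.sum_fiberwise_of_maps_to (g := fun A => A ∩ S)
      (fun A _ => Finset.mem_powerset.mpr Finset.inter_subset_right)]
    unfold shapGen
    refine Finset.sum_congr rfl fun W hW => ?_
    have hWS : W ⊆ S := Finset.mem_powerset.mp hW
    by_cases hiW : i ∈ W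
    · rw [if_pos hiW]
      have step1 : ∑ A ∈ D.powerset.filter (fun A => A ∩ S = W),
          (if i ∈ A then ((D.card : ℝ) * (((D.card - 1).choose (A.card - 1)):ℝ))⁻¹
            * margContrib p x (A ∩ S) i else 0)
          = (∑ A ∈ D.powerset.filter (fun A => A ∩ S = W),
              ((D.card : ℝ) * (((D.card - 1).choose (A.card - 1)):ℝ))⁻¹)
            * margContrib p x W i := by
        rw [Finset.sum_mul]
        refine Finset.sum_congr rfl fun A hA => ?_
        have hAS : A ∩ S = W := (Finset.mem_filter.mp hA).2
        have hiA : i ∈ A := by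
          have h' : i ∈ A ∩ S := hAS.symm ▸ hiW
          exact Finset.mem_of_mem_inter_left h'
        rw [if_pos hiA, hAS]
      rw [step1, Finset.sum_filter, weight_id D S W hSD hWS ⟨i, hiW⟩]
    · rw [if_neg hiW]
      refine Finset.sum_eq_zero fun A hA => ?_
      have hAS : A ∩ S = W := (Finset.mem_filter.mp hA).2
      rw [if_neg]
      intro hiA
      exact hiW (hAS ▸ Finset.mem_inter.mpr ⟨hiA, hiS⟩)
  rw [← hgroup]
  unfold shapGen
  rw [← Finset.sum_sub_distrib]
  refine Finset.sum_congr rfl fun A _ => ?_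
  split_ifs with h
  · ring
  · ring

/-! ### The generic error bound -/

lemma gen_bound [Nonempty 𝒴] (p : (∀ j, 𝒳 j) → 𝒴 → ℝ) (hpos : ∀ x y, 0 < p x y)
    (i : Fin d) (S D : Finset (Fin d)) (hiS : i ∈ S) (hSD : S ⊆ D) (ε : ℝ)
    (hI : ∀ U ⊆ S.erase i, ∀ V ⊆ Finset.univ \ S,
      IaXY p {i} V U ≤ ε ∧ IaX p {i} V U ≤ ε) :
    ∑ x : ∀ j, 𝒳 j, pX p x * |shapGen p x D i - shapGen p x S i| ≤ 2 * ε := by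
  classical
  have hAbound : ∀ A ∈ D.powerset, i ∈ A →
      ∑ x : ∀ j, 𝒳 j, pX p x * |margContrib p x A i - margContrib p x (A ∩ S) i|
        ≤ 2 * ε := by
    intro A _ hiA
    have hiAS : i ∈ A ∩ S := Finset.mem_inter.mpr ⟨hiA, hiS⟩
    set U : Finset (Fin d) := (A ∩ S).erase i with hU
    set V : Finset (Fin d) := A \ S with hV
    have hAS : A ∩ S = insert i U := (Finset.insert_erase hiAS).symm
    have hA2 : A = insert i (U ∪ V) := by
      rw [← Finset.insert_union, ← hAS, Finset.union_comm, Finset.sdiff_union_inter]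
    have hiU : i ∉ U := Finset.notMem_erase _ _
    have hiV : i ∉ V := by
      rw [hV, Finset.mem_sdiff]; tauto
    have hUsub : U ⊆ S.erase i := Finset.erase_subset_erase _ Finset.inter_subset_right
    have hVsub : V ⊆ Finset.univ \ S :=
      Finset.sdiff_subset_sdiff (Finset.subset_univ A) le_rfl
    obtain ⟨h1, h2⟩ := hI U hUsub V hVsub
    calc ∑ x : ∀ j, 𝒳 j, pX p x * |margContrib p x A i - margContrib p x (A ∩ S) i|
        = ∑ x : ∀ j, 𝒳 j, pX p x *
            |margContrib p x (insert i (U ∪ V)) i - margContrib p x (insert i U) i| := by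
          rw [← hA2, ← hAS]
      _ ≤ IaXY p {i} V U + IaX p {i} V U := contrib_bound p hpos i U V hiU hiV
      _ ≤ ε + ε := add_le_add h1 h2
      _ = 2 * ε := by ring
  have key : ∀ x : ∀ j, 𝒳 j, pX p x * |shapGen p x D i - shapGen p x S i|
      ≤ ∑ A ∈ D.powerset, (if i ∈ A then
          ((D.card : ℝ) * (((D.card - 1).choose (A.card - 1)):ℝ))⁻¹
            * (pX p x * |margContrib p x A i - margContrib p x (A ∩ S) i|) else 0) := by
    intro x
    rw [shapGen_sub p x D S i hSD hiS]
    calc pX p x * |∑ A ∈ D.powerset, if i ∈ A then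
            ((D.card : ℝ) * (((D.card - 1).choose (A.card - 1)):ℝ))⁻¹
              * (margContrib p x A i - margContrib p x (A ∩ S) i) else 0|
        ≤ pX p x * ∑ A ∈ D.powerset, |if i ∈ A then
            ((D.card : ℝ) * (((D.card - 1).choose (A.card - 1)):ℝ))⁻¹
              * (margContrib p x A i - margContrib p x (A ∩ S) i) else 0| :=
          mul_le_mul_of_nonneg_left (Finset.abs_sum_le_sum_abs _ _) (pX_pos p hpos x).le
      _ = ∑ A ∈ D.powerset, (if i ∈ A then
            ((D.card : ℝ) * (((D.card - 1).choose (A.card - 1)):ℝ))⁻¹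
              * (pX p x * |margContrib p x A i - margContrib p x (A ∩ S) i|) else 0) := by
          rw [Finset.mul_sum]
          refine Finset.sum_congr rfl fun A _ => ?_
          have hw : (0:ℝ) ≤ ((D.card : ℝ) * (((D.card - 1).choose (A.card - 1)):ℝ))⁻¹ := by
            positivity
          split_ifs with h
          · rw [abs_mul, abs_of_nonneg hw]; ring
          · simp
  calc ∑ x : ∀ j, 𝒳 j, pX p x * |shapGen p x D i - shapGen p x S i|
      ≤ ∑ x : ∀ j, 𝒳 j, ∑ A ∈ D.powerset, (if i ∈ A then
          ((D.card : ℝ) * (((D.card - 1).choose (A.card - 1)):ℝ))⁻¹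
            * (pX p x * |margContrib p x A i - margContrib p x (A ∩ S) i|) else 0) :=
        Finset.sum_le_sum fun x _ => key x
    _ = ∑ A ∈ D.powerset, ∑ x : ∀ j, 𝒳 j, (if i ∈ A then
          ((D.card : ℝ) * (((D.card - 1).choose (A.card - 1)):ℝ))⁻¹
            * (pX p x * |margContrib p x A i - margContrib p x (A ∩ S) i|) else 0) :=
        Finset.sum_comm
    _ = ∑ A ∈ D.powerset, (if i ∈ A then
          ((D.card : ℝ) * (((D.card - 1).choose (A.card - 1)):ℝ))⁻¹
            * (∑ x : ∀ j, 𝒳 j, pX p x * |margContrib p x A i - margContrib p x (A ∩ S) i|)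
          else 0) := by
        refine Finset.sum_congr rfl fun A _ => ?_
        split_ifs with h
        · rw [Finset.mul_sum]
        · exact Finset.sum_const_zero
    _ ≤ ∑ A ∈ D.powerset, (if i ∈ A then
          ((D.card : ℝ) * (((D.card - 1).choose (A.card - 1)):ℝ))⁻¹ * (2 * ε) else 0) := by
        refine Finset.sum_le_sum fun A hA => ?_
        split_ifs with h
        · refine mul_le_mul_of_nonneg_left (hAbound A hA h) ?_
          positivity
        · exact le_rfl
    _ = (∑ A ∈ D.powerset, (if i ∈ A then
          ((D.card : ℝ) * (((D.card - 1).choose (A.card - 1)):ℝ))⁻¹ else 0)) * (2 * ε) := by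
        rw [Finset.sum_mul]
        refine Finset.sum_congr rfl fun A _ => ?_
        split_ifs with h
        · rfl
        · rw [zero_mul]
    _ = 2 * ε := by
        rw [sum_weight_one D i (hSD hiS), one_mul]
/-- Theorem 1: if there is a subset `S ⊆ N_k(i)` containing `i` such that for every
`U ⊆ S \ {i}` and `V ⊆ [d] \ S` both `I_a(X_i; X_V | X_U, Y) ≤ ε` and
`I_a(X_i; X_V | X_U) ≤ ε`, then the expected error between the L-Shapley estimate
of order `k` and the Shapley value is at most `4ε`. -/
theorem lshapley_error_le_four_eps (p : (∀ j, 𝒳 j) → 𝒴 → ℝ)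
    (hpos : ∀ x y, 0 < p x y)
    (hsum : ∑ x : ∀ j, 𝒳 j, ∑ y, p x y = 1)
    (G : SimpleGraph (Fin d)) (i : Fin d) (k : ℕ) (ε : ℝ)
    (hS : ∃ S ⊆ nbhd G i k, i ∈ S ∧
      ∀ U ⊆ S.erase i, ∀ V ⊆ Finset.univ \ S,
        IaXY p {i} V U ≤ ε ∧ IaX p {i} V U ≤ ε) :
    ∑ x : ∀ j, 𝒳 j, pX p x * |shapleyRes p x (nbhd G i k) i - shapley p x i|
      ≤ 4 * ε := by
  classical
  obtain ⟨S, hSN, hiS, hI⟩ := hS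
  haveI hY : Nonempty 𝒴 := by
    by_contra h
    rw [not_nonempty_iff] at h
    simp only [Finset.univ_eq_empty, Finset.sum_empty, Finset.sum_const_zero] at hsum
    norm_num at hsum
  have hiN : i ∈ nbhd G i k := by
    unfold nbhd
    simp only [Finset.mem_filter, Finset.mem_univ, true_and]
    exact ⟨SimpleGraph.Reachable.refl i, by rw [SimpleGraph.dist_self]; exact Nat.zero_le k⟩
  have hb1 := gen_bound p hpos i S (nbhd G i k) hiS hSN ε hI
  have hb2 := gen_bound p hpos i S Finset.univ hiS (Finset.subset_univ S) ε hI
  calc ∑ x : ∀ j, 𝒳 j, pX p x * |shapleyRes p x (nbhd G i k) i - shapley p x i|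
      ≤ ∑ x : ∀ j, 𝒳 j, (pX p x * |shapGen p x (nbhd G i k) i - shapGen p x S i|
            + pX p x * |shapGen p x Finset.univ i - shapGen p x S i|) := by
        refine Finset.sum_le_sum fun x _ => ?_
        have hx : shapleyRes p x (nbhd G i k) i - shapley p x i
            = (shapGen p x (nbhd G i k) i - shapGen p x S i)
              - (shapGen p x Finset.univ i - shapGen p x S i) := by
          rw [shapleyRes_eq_shapGen, shapley_eq_shapGen]; ring
        rw [hx, ← mul_add]
        exact mul_le_mul_of_nonneg_left (abs_sub _ _) (pX_pos p hpos x).le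
    _ = (∑ x : ∀ j, 𝒳 j, pX p x * |shapGen p x (nbhd G i k) i - shapGen p x S i|)
          + ∑ x : ∀ j, 𝒳 j, pX p x * |shapGen p x Finset.univ i - shapGen p x S i| :=
        Finset.sum_add_distrib
    _ ≤ 2 * ε + 2 * ε := add_le_add hb1 hb2
    _ = 4 * ε := by ring
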